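/- Let P^{AE} be a sub-distribution on A × E, Q a normalized distribution on E with Q(e) > 0 for all e, and B a finite set with |B| = M. Let (f_x : A → B)_{x∈X} be a universal₂ ensemble over a finite probability space (X,w), i.e. Pr_X[f_X(a₁) = f_X(a₂)] ≤ 1/M for all a₁ ≠ a₂ in A. Then E_X [ d₁'(f_X(A)|E|P^{AE}) ] ≤ M^{1/2} · ( Σ_{a,e} P^{AE}(a,e)²·Q(e)^{-1} )^{1/2} = M^{1/2}·e^{−H₂(A|E|P^{AE}‖Q)/2}. Moreover, if P^{AE} is normalized with P^E(e) > 0 for all e, then E_X [ I'(f_X(A)|E|P^{AE}) ] ≤ log( 1 + M·e^{−H₂(A|E|P^{AE}‖P^E)} ) ≤ M·e^{−H₂(A|E|P^{AE}‖P^E)}. -/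

import Mathlib

open scoped BigOperators

open Classical in
/-- Probability of the event `p` with respect to the weight `w` on a finite index set. -/
noncomputable def prOf {X : Type*} [Fintype X] (w : X → ℝ) (p : X → Prop) : ℝ :=
  ∑ x, if p x then w x else 0

open Classical in
/-- Pushforward `P^{f(A),E}(b,e) = Σ_{a : f(a)=b} P^{AE}(a,e)`. -/
noncomputable def push {A B E : Type*} [Fintype A] (f : A → B) (P : A × E → ℝ)
    (b : B) (e : E) : ℝ :=
  ∑ a, if f a = b then P (a, e) else 0

section Aux
variable {ι : Type*} [Fintype ι]

lemma prOf_le_one {X : Type*} [Fintype X] (w : X → ℝ) (hw0 : ∀ x, 0 ≤ w x)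
    (hw1 : ∑ x, w x = 1) (p : X → Prop) : prOf w p ≤ 1 := by
  classical
  rw [prOf, ← hw1]
  apply Finset.sum_le_sum
  intro x _
  split <;> simp [hw0 x]

lemma prOf_nonneg {X : Type*} [Fintype X] (w : X → ℝ) (hw0 : ∀ x, 0 ≤ w x)
    (p : X → Prop) : 0 ≤ prOf w p := by
  classical
  apply Finset.sum_nonneg
  intro x _
  split <;> simp [hw0 x]

lemma push_nonneg {A B E : Type*} [Fintype A] (f : A → B) (P : A × E → ℝ)
    (hP0 : ∀ x, 0 ≤ P x) (b : B) (e : E) : 0 ≤ push f P b e := by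
  classical
  apply Finset.sum_nonneg
  intro a _
  split <;> simp [hP0 (a, e)]

lemma push_sum {A B E : Type*} [Fintype A] [Fintype B] (f : A → B) (P : A × E → ℝ)
    (e : E) : ∑ b, push f P b e = ∑ a, P (a, e) := by
  classical
  simp only [push]
  rw [Finset.sum_comm]
  simp

/-- Jensen for log. -/
lemma jensen_log (q t : ι → ℝ) (hq0 : ∀ i, 0 ≤ q i) (hq1 : ∑ i, q i = 1)
    (ht0 : ∀ i, 0 ≤ t i) (ht : ∀ i, 0 < q i → 0 < t i) :
    ∑ i, q i * Real.log (t i) ≤ Real.log (∑ i, q i * t i) := by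
  set T := ∑ i, q i * t i with hT
  have hT0 : 0 < T := by
    obtain ⟨i, hi⟩ : ∃ i, (0:ℝ) < q i := by
      by_contra h
      push_neg at h
      have : ∑ i, q i ≤ 0 := Finset.sum_nonpos (fun i _ => h i)
      linarith [hq1]
    have hti := ht i hi
    have : 0 < q i * t i := mul_pos hi hti
    calc (0:ℝ) < q i * t i := mul_pos hi hti
      _ ≤ T := Finset.single_le_sum (f := fun i => q i * t i)
        (fun j _ => mul_nonneg (hq0 j) (ht0 j)) (Finset.mem_univ i)
  have key : ∑ i, (q i * Real.log (t i) - q i * Real.log T) ≤ 0 := by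
    have h1 : ∀ i, q i * Real.log (t i) - q i * Real.log T ≤ q i * (t i / T - 1) := by
      intro i
      rcases eq_or_lt_of_le (hq0 i) with h | h
      · simp [← h]
      · have hti := ht i h
        have hlog : Real.log (t i / T) ≤ t i / T - 1 :=
          Real.log_le_sub_one_of_pos (div_pos hti hT0)
        rw [Real.log_div (ne_of_gt hti) (ne_of_gt hT0)] at hlog
        nlinarith
    calc ∑ i, (q i * Real.log (t i) - q i * Real.log T)
        ≤ ∑ i, q i * (t i / T - 1) := Finset.sum_le_sum (fun i _ => h1 i)
      _ = (∑ i, q i * t i) / T - ∑ i, q i := by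
          rw [Finset.sum_div, ← Finset.sum_sub_distrib]
          congr 1; ext i; field_simp
      _ = 0 := by rw [hq1, ← hT]; field_simp; ring
  have : ∑ i, q i * Real.log T = Real.log T := by
    rw [← Finset.sum_mul, hq1, one_mul]
  rw [Finset.sum_sub_distrib, this] at key
  linarith

/-- Jensen for sqrt. -/
lemma jensen_sqrt (w y : ι → ℝ) (hw0 : ∀ i, 0 ≤ w i) (hw1 : ∑ i, w i = 1)
    (hy : ∀ i, 0 ≤ y i) :
    ∑ i, w i * Real.sqrt (y i) ≤ Real.sqrt (∑ i, w i * y i) := by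
  have hSnn : 0 ≤ ∑ i, w i * y i :=
    Finset.sum_nonneg (fun i _ => mul_nonneg (hw0 i) (hy i))
  have hLnn : 0 ≤ ∑ i, w i * Real.sqrt (y i) :=
    Finset.sum_nonneg (fun i _ => mul_nonneg (hw0 i) (Real.sqrt_nonneg _))
  rw [Real.le_sqrt hLnn hSnn]
  calc (∑ i, w i * Real.sqrt (y i)) ^ 2
      = (∑ i, Real.sqrt (w i) * Real.sqrt (w i * y i)) ^ 2 := by
        congr 1; apply Finset.sum_congr rfl; intro i _
        rw [Real.sqrt_mul (hw0 i), ← mul_assoc, Real.mul_self_sqrt (hw0 i)]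
    _ ≤ (∑ i, Real.sqrt (w i) ^ 2) * ∑ i, Real.sqrt (w i * y i) ^ 2 :=
        Finset.sum_mul_sq_le_sq_mul_sq _ _ _
    _ = (∑ i, w i) * ∑ i, w i * y i := by
        congr 1 <;> (apply Finset.sum_congr rfl; intro i _)
        · exact Real.sq_sqrt (hw0 i)
        · exact Real.sq_sqrt (mul_nonneg (hw0 i) (hy i))
    _ = ∑ i, w i * y i := by rw [hw1, one_mul]

end Aux

lemma second_moment {A B E X : Type*} [Fintype A] [Fintype B] [Fintype X]
    (P : A × E → ℝ) (hP0 : ∀ x, 0 ≤ P x)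
    (w : X → ℝ) (hw0 : ∀ x, 0 ≤ w x) (hw1 : ∑ x, w x = 1)
    (f : X → A → B)
    (huniv : ∀ a₁ a₂ : A, a₁ ≠ a₂ →
      prOf w (fun x => f x a₁ = f x a₂) ≤ (Fintype.card B : ℝ)⁻¹)
    (e : E) :
    ∑ x, w x * ∑ b, (push (f x) P b e)^2
      ≤ (∑ a, P (a,e)^2) + (∑ a, P (a,e))^2 * (Fintype.card B : ℝ)⁻¹ := by
  classical
  have hexp : ∀ x : X, ∑ b, (push (f x) P b e)^2
      = ∑ a₁, ∑ a₂, if f x a₁ = f x a₂ then P (a₁,e) * P (a₂,e) else 0 := by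
    intro x
    have hb : ∀ a₁ a₂ : A, ∑ b : B,
        (if f x a₁ = b then P (a₁,e) else 0) * (if f x a₂ = b then P (a₂,e) else 0)
        = if f x a₁ = f x a₂ then P (a₁,e) * P (a₂,e) else 0 := by
      intro a₁ a₂
      by_cases h : f x a₁ = f x a₂
      · simp [h, mul_ite, ite_mul, Finset.sum_ite_eq]
      · rw [if_neg h]
        apply Finset.sum_eq_zero
        intro b _
        rcases eq_or_ne (f x a₁) b with h1 | h1
        · rw [if_neg (show f x a₂ ≠ b from fun h2 => h (h1.trans h2.symm)), mul_zero]
        · rw [if_neg h1, zero_mul]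
    calc ∑ b, (push (f x) P b e)^2
        = ∑ b : B, ∑ a₁, ∑ a₂,
            (if f x a₁ = b then P (a₁,e) else 0) * (if f x a₂ = b then P (a₂,e) else 0) := by
          apply Finset.sum_congr rfl; intro b _
          rw [push, sq, Finset.sum_mul_sum]
      _ = ∑ a₁, ∑ a₂, ∑ b : B,
            (if f x a₁ = b then P (a₁,e) else 0) * (if f x a₂ = b then P (a₂,e) else 0) := by
          rw [Finset.sum_comm]
          apply Finset.sum_congr rfl; intro a₁ _
          rw [Finset.sum_comm]
      _ = ∑ a₁, ∑ a₂, if f x a₁ = f x a₂ then P (a₁,e) * P (a₂,e) else 0 := by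
          apply Finset.sum_congr rfl; intro a₁ _
          apply Finset.sum_congr rfl; intro a₂ _
          exact hb a₁ a₂
  calc ∑ x, w x * ∑ b, (push (f x) P b e)^2
      = ∑ a₁, ∑ a₂, P (a₁,e) * P (a₂,e) * prOf w (fun x => f x a₁ = f x a₂) := by
        simp only [hexp, Finset.mul_sum]
        rw [Finset.sum_comm]
        apply Finset.sum_congr rfl; intro a₁ _
        rw [Finset.sum_comm]
        apply Finset.sum_congr rfl; intro a₂ _
        rw [prOf, Finset.mul_sum]
        apply Finset.sum_congr rfl; intro x _
        by_cases h : f x a₁ = f x a₂ <;> simp [h] <;> ring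
    _ ≤ ∑ a₁, ∑ a₂, (if a₁ = a₂ then P (a₁,e)^2
          else P (a₁,e) * P (a₂,e) * (Fintype.card B : ℝ)⁻¹) := by
        apply Finset.sum_le_sum; intro a₁ _
        apply Finset.sum_le_sum; intro a₂ _
        by_cases h : a₁ = a₂
        · subst h
          rw [if_pos rfl]
          calc P (a₁,e) * P (a₁,e) * prOf w (fun x => f x a₁ = f x a₁)
              ≤ P (a₁,e) * P (a₁,e) * 1 := by
                apply mul_le_mul_of_nonneg_left (prOf_le_one w hw0 hw1 _)
                  (mul_nonneg (hP0 _) (hP0 _))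
            _ = P (a₁,e)^2 := by ring
        · rw [if_neg h]
          exact mul_le_mul_of_nonneg_left (huniv a₁ a₂ h)
            (mul_nonneg (hP0 _) (hP0 _))
    _ ≤ (∑ a, P (a,e)^2) + (∑ a, P (a,e))^2 * (Fintype.card B : ℝ)⁻¹ := by
        have hM : (0:ℝ) ≤ (Fintype.card B : ℝ)⁻¹ := by positivity
        have hsplit : ∀ a₁ a₂ : A,
            (if a₁ = a₂ then P (a₁,e)^2 else P (a₁,e) * P (a₂,e) * (Fintype.card B : ℝ)⁻¹)
            = (if a₁ = a₂ then P (a₁,e)^2 - P (a₁,e) * P (a₂,e) * (Fintype.card B : ℝ)⁻¹ else 0)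
              + P (a₁,e) * P (a₂,e) * (Fintype.card B : ℝ)⁻¹ := by
          intro a₁ a₂; by_cases h : a₁ = a₂ <;> simp [h]
        simp only [hsplit, Finset.sum_add_distrib]
        have h1 : ∑ a₁, ∑ a₂, (if a₁ = a₂ then
            P (a₁,e)^2 - P (a₁,e) * P (a₂,e) * (Fintype.card B : ℝ)⁻¹ else 0)
            ≤ ∑ a, P (a,e)^2 := by
          apply Finset.sum_le_sum; intro a₁ _
          rw [Finset.sum_ite_eq Finset.univ a₁]
          simp only [Finset.mem_univ, if_pos]
          nlinarith [hP0 (a₁, e), sq_nonneg (P (a₁,e))]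
        have h2 : ∑ a₁ : A, ∑ a₂ : A, P (a₁,e) * P (a₂,e) * (Fintype.card B : ℝ)⁻¹
            = (∑ a, P (a,e))^2 * (Fintype.card B : ℝ)⁻¹ := by
          rw [sq, Finset.sum_mul_sum]
          simp [Finset.sum_mul]
        rw [h2]
        linarith

lemma sum_pos_of_jensen {ι : Type*} [Fintype ι] (q t : ι → ℝ) (hq0 : ∀ i, 0 ≤ q i)
    (hq1 : ∑ i, q i = 1) (ht0 : ∀ i, 0 ≤ t i) (ht : ∀ i, 0 < q i → 0 < t i) :
    0 < ∑ i, q i * t i := by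
  obtain ⟨i, hi⟩ : ∃ i, (0:ℝ) < q i := by
    by_contra h
    push_neg at h
    have : ∑ i, q i ≤ 0 := Finset.sum_nonpos (fun i _ => h i)
    linarith [hq1]
  calc (0:ℝ) < q i * t i := mul_pos hi (ht i hi)
    _ ≤ ∑ i, q i * t i := Finset.single_le_sum (f := fun i => q i * t i)
      (fun j _ => mul_nonneg (hq0 j) (ht0 j)) (Finset.mem_univ i)

theorem stmt_11 {A B E : Type*} [Fintype A] [Nonempty A] [Fintype B] [Nonempty B]
    [Fintype E] [Nonempty E]
    (P : A × E → ℝ) (hP0 : ∀ x, 0 ≤ P x) (hP1 : ∑ x, P x ≤ 1)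
    (Q : E → ℝ) (hQ0 : ∀ e, 0 < Q e) (hQ1 : ∑ e, Q e = 1)
    {X : Type*} [Fintype X] [Nonempty X] (w : X → ℝ)
    (hw0 : ∀ x, 0 ≤ w x) (hw1 : ∑ x, w x = 1)
    (f : X → A → B)
    (huniv : ∀ a₁ a₂ : A, a₁ ≠ a₂ →
      prOf w (fun x => f x a₁ = f x a₂) ≤ (Fintype.card B : ℝ)⁻¹) :
    (∑ x, w x *
        ∑ b : B, ∑ e : E, |push (f x) P b e - (∑ a, P (a, e)) / (Fintype.card B : ℝ)| ≤
      Real.sqrt (Fintype.card B : ℝ) *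
        Real.sqrt (∑ a : A, ∑ e : E, P (a, e) ^ 2 * (Q e)⁻¹)) ∧
    ((∑ x, P x) = 1 → (∀ e : E, 0 < ∑ a, P (a, e)) →
      (∑ x, w x *
          ∑ b : B, ∑ e : E, push (f x) P b e *
            Real.log ((Fintype.card B : ℝ) * push (f x) P b e / (∑ a, P (a, e))) ≤
        Real.log (1 + (Fintype.card B : ℝ) *
          ∑ a : A, ∑ e : E, P (a, e) ^ 2 * (∑ a', P (a', e))⁻¹)) ∧
      (Real.log (1 + (Fintype.card B : ℝ) *
          ∑ a : A, ∑ e : E, P (a, e) ^ 2 * (∑ a', P (a', e))⁻¹) ≤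
        (Fintype.card B : ℝ) *
          ∑ a : A, ∑ e : E, P (a, e) ^ 2 * (∑ a', P (a', e))⁻¹)) := by
  classical
  have hM0 : (0:ℝ) < (Fintype.card B : ℝ) := by
    exact_mod_cast Fintype.card_pos
  -- common key estimate, per e
  have key : ∀ e : E, ∑ x, w x *
      ∑ b, (push (f x) P b e - (∑ a, P (a,e)) / (Fintype.card B : ℝ))^2
      ≤ ∑ a, P (a,e)^2 := by
    intro e
    have hsm := second_moment P hP0 w hw0 hw1 f huniv e
    have hbd : ∀ x : X, ∑ b, (push (f x) P b e - (∑ a, P (a,e)) / (Fintype.card B : ℝ))^2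
        = (∑ b, (push (f x) P b e)^2)
          - (∑ a, P (a,e))^2 / (Fintype.card B : ℝ) := by
      intro x
      have hps := push_sum (f x) P e
      have hcard : ∑ _b : B, ((∑ a, P (a,e)) / (Fintype.card B : ℝ))^2
          = (Fintype.card B : ℝ) * ((∑ a, P (a,e)) / (Fintype.card B : ℝ))^2 := by
        rw [Finset.sum_const, Finset.card_univ, nsmul_eq_mul]
      calc ∑ b, (push (f x) P b e - (∑ a, P (a,e)) / (Fintype.card B : ℝ))^2
          = ∑ b, ((push (f x) P b e)^2
              - 2 * ((∑ a, P (a,e)) / (Fintype.card B : ℝ)) * push (f x) P b e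
              + ((∑ a, P (a,e)) / (Fintype.card B : ℝ))^2) := by
            apply Finset.sum_congr rfl; intro b _; ring
        _ = (∑ b, (push (f x) P b e)^2)
              - 2 * ((∑ a, P (a,e)) / (Fintype.card B : ℝ)) * (∑ b, push (f x) P b e)
              + (Fintype.card B : ℝ) * ((∑ a, P (a,e)) / (Fintype.card B : ℝ))^2 := by
            rw [Finset.sum_add_distrib, Finset.sum_sub_distrib, ← Finset.mul_sum, hcard]
        _ = (∑ b, (push (f x) P b e)^2)
              - (∑ a, P (a,e))^2 / (Fintype.card B : ℝ) := by
            rw [hps]; field_simp; ring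
    calc ∑ x, w x * ∑ b, (push (f x) P b e - (∑ a, P (a,e)) / (Fintype.card B : ℝ))^2
        = ∑ x, w x * ((∑ b, (push (f x) P b e)^2)
            - (∑ a, P (a,e))^2 / (Fintype.card B : ℝ)) :=
          Finset.sum_congr rfl (fun x _ => by rw [hbd x])
      _ = (∑ x, w x * ∑ b, (push (f x) P b e)^2)
            - (∑ a, P (a,e))^2 / (Fintype.card B : ℝ) := by
          simp only [mul_sub]
          rw [Finset.sum_sub_distrib, ← Finset.sum_mul, hw1, one_mul]
      _ ≤ ((∑ a, P (a,e)^2) + (∑ a, P (a,e))^2 * (Fintype.card B : ℝ)⁻¹)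
            - (∑ a, P (a,e))^2 / (Fintype.card B : ℝ) := by linarith
      _ = ∑ a, P (a,e)^2 := by rw [div_eq_mul_inv]; ring
  constructor
  · -- Part 1
    have hA : ∀ x : X, ∑ b : B, ∑ e : E,
        |push (f x) P b e - (∑ a, P (a,e)) / (Fintype.card B : ℝ)|
        ≤ Real.sqrt (Fintype.card B : ℝ) * Real.sqrt (∑ b : B, ∑ e : E,
          (push (f x) P b e - (∑ a, P (a,e)) / (Fintype.card B : ℝ))^2 * (Q e)⁻¹) := by
      intro x
      set δ : B → E → ℝ := fun b e => push (f x) P b e - (∑ a, P (a,e)) / (Fintype.card B : ℝ)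
        with hδ
      have hD0 : 0 ≤ ∑ b, ∑ e, |δ b e| :=
        Finset.sum_nonneg fun b _ => Finset.sum_nonneg fun e _ => abs_nonneg _
      have hY0 : 0 ≤ ∑ b, ∑ e, (δ b e)^2 * (Q e)⁻¹ :=
        Finset.sum_nonneg fun b _ => Finset.sum_nonneg fun e _ =>
          mul_nonneg (sq_nonneg _) (inv_nonneg.mpr (hQ0 e).le)
      have hCS : (∑ b, ∑ e, |δ b e|)^2
          ≤ (Fintype.card B : ℝ) * ∑ b, ∑ e, (δ b e)^2 * (Q e)⁻¹ := by
        have h := Finset.sum_mul_sq_le_sq_mul_sq Finset.univ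
          (fun i : B × E => |δ i.1 i.2| * (Real.sqrt (Q i.2))⁻¹)
          (fun i : B × E => Real.sqrt (Q i.2))
        have h1 : ∑ i : B × E, |δ i.1 i.2| * (Real.sqrt (Q i.2))⁻¹ * Real.sqrt (Q i.2)
            = ∑ b, ∑ e, |δ b e| := by
          rw [Fintype.sum_prod_type]
          apply Finset.sum_congr rfl; intro b _
          apply Finset.sum_congr rfl; intro e _
          rw [mul_assoc, inv_mul_cancel₀ (ne_of_gt (Real.sqrt_pos.mpr (hQ0 e))), mul_one]
        have h2 : ∑ i : B × E, (|δ i.1 i.2| * (Real.sqrt (Q i.2))⁻¹)^2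
            = ∑ b, ∑ e, (δ b e)^2 * (Q e)⁻¹ := by
          rw [Fintype.sum_prod_type]
          apply Finset.sum_congr rfl; intro b _
          apply Finset.sum_congr rfl; intro e _
          rw [mul_pow, sq_abs, ← Real.sqrt_inv, Real.sq_sqrt (inv_nonneg.mpr (hQ0 e).le)]
        have h3 : ∑ i : B × E, (Real.sqrt (Q i.2))^2 = (Fintype.card B : ℝ) := by
          rw [Fintype.sum_prod_type]
          have h4 : ∑ e, (Real.sqrt (Q e))^2 = 1 := by
            rw [← hQ1]
            exact Finset.sum_congr rfl fun e _ => Real.sq_sqrt (hQ0 e).le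
          simp [h4]
        rw [h1, h2, h3] at h
        linarith
      have := (Real.le_sqrt hD0 (by positivity)).mpr hCS
      calc ∑ b, ∑ e, |δ b e|
          ≤ Real.sqrt ((Fintype.card B : ℝ) * ∑ b, ∑ e, (δ b e)^2 * (Q e)⁻¹) := this
        _ = Real.sqrt (Fintype.card B : ℝ)
            * Real.sqrt (∑ b, ∑ e, (δ b e)^2 * (Q e)⁻¹) := Real.sqrt_mul hM0.le _
    have hY : ∑ x, w x * (∑ b : B, ∑ e : E,
        (push (f x) P b e - (∑ a, P (a,e)) / (Fintype.card B : ℝ))^2 * (Q e)⁻¹)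
        ≤ ∑ a, ∑ e, P (a,e)^2 * (Q e)⁻¹ := by
      have hre : ∀ x : X, w x * (∑ b : B, ∑ e : E,
          (push (f x) P b e - (∑ a, P (a,e)) / (Fintype.card B : ℝ))^2 * (Q e)⁻¹)
          = ∑ e, (w x * ∑ b, (push (f x) P b e
              - (∑ a, P (a,e)) / (Fintype.card B : ℝ))^2) * (Q e)⁻¹ := by
        intro x
        rw [Finset.sum_comm, Finset.mul_sum]
        apply Finset.sum_congr rfl; intro e _
        rw [← Finset.sum_mul, ← mul_assoc]
      calc ∑ x, w x * (∑ b : B, ∑ e : E,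
            (push (f x) P b e - (∑ a, P (a,e)) / (Fintype.card B : ℝ))^2 * (Q e)⁻¹)
          = ∑ e, (∑ x, w x * ∑ b, (push (f x) P b e
              - (∑ a, P (a,e)) / (Fintype.card B : ℝ))^2) * (Q e)⁻¹ := by
            simp only [hre]
            rw [Finset.sum_comm]
            exact Finset.sum_congr rfl fun e _ => (Finset.sum_mul _ _ _).symm
        _ ≤ ∑ e, (∑ a, P (a,e)^2) * (Q e)⁻¹ :=
            Finset.sum_le_sum fun e _ =>
              mul_le_mul_of_nonneg_right (key e) (inv_nonneg.mpr (hQ0 e).le)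
        _ = ∑ a, ∑ e, P (a,e)^2 * (Q e)⁻¹ := by
            rw [Finset.sum_comm]
            exact Finset.sum_congr rfl fun e _ => Finset.sum_mul _ _ _
    calc ∑ x, w x * ∑ b : B, ∑ e : E,
          |push (f x) P b e - (∑ a, P (a,e)) / (Fintype.card B : ℝ)|
        ≤ ∑ x, w x * (Real.sqrt (Fintype.card B : ℝ) * Real.sqrt (∑ b : B, ∑ e : E,
            (push (f x) P b e - (∑ a, P (a,e)) / (Fintype.card B : ℝ))^2 * (Q e)⁻¹)) :=
          Finset.sum_le_sum fun x _ => mul_le_mul_of_nonneg_left (hA x) (hw0 x)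
      _ = Real.sqrt (Fintype.card B : ℝ) * ∑ x, w x * Real.sqrt (∑ b : B, ∑ e : E,
            (push (f x) P b e - (∑ a, P (a,e)) / (Fintype.card B : ℝ))^2 * (Q e)⁻¹) := by
          rw [Finset.mul_sum]
          exact Finset.sum_congr rfl fun x _ => by ring
      _ ≤ Real.sqrt (Fintype.card B : ℝ) * Real.sqrt (∑ x, w x * (∑ b : B, ∑ e : E,
            (push (f x) P b e - (∑ a, P (a,e)) / (Fintype.card B : ℝ))^2 * (Q e)⁻¹)) := by
          apply mul_le_mul_of_nonneg_left _ (Real.sqrt_nonneg _)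
          exact jensen_sqrt w _ hw0 hw1 fun x =>
            Finset.sum_nonneg fun b _ => Finset.sum_nonneg fun e _ =>
              mul_nonneg (sq_nonneg _) (inv_nonneg.mpr (hQ0 e).le)
      _ ≤ Real.sqrt (Fintype.card B : ℝ)
            * Real.sqrt (∑ a, ∑ e, P (a,e)^2 * (Q e)⁻¹) :=
          mul_le_mul_of_nonneg_left (Real.sqrt_le_sqrt hY) (Real.sqrt_nonneg _)
  · intro hPn hPE
    have hC0 : 0 ≤ ∑ a : A, ∑ e : E, P (a, e) ^ 2 * (∑ a', P (a', e))⁻¹ :=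
      Finset.sum_nonneg fun a _ => Finset.sum_nonneg fun e _ =>
        mul_nonneg (sq_nonneg _) (inv_nonneg.mpr (hPE e).le)
    have h1C : (0:ℝ) < 1 + (Fintype.card B : ℝ) *
        ∑ a : A, ∑ e : E, P (a, e) ^ 2 * (∑ a', P (a', e))⁻¹ := by nlinarith
    have hlogle : Real.log (1 + (Fintype.card B : ℝ) *
        ∑ a : A, ∑ e : E, P (a, e) ^ 2 * (∑ a', P (a', e))⁻¹) ≤
        (Fintype.card B : ℝ) * ∑ a : A, ∑ e : E, P (a, e) ^ 2 * (∑ a', P (a', e))⁻¹ := by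
      have := Real.log_le_sub_one_of_pos h1C
      linarith
    refine ⟨?_, hlogle⟩
    have hPEsum : ∑ e : E, ∑ a : A, P (a, e) = 1 := by
      rw [Finset.sum_comm, ← Fintype.sum_prod_type]
      exact hPn
    set q : X × B × E → ℝ := fun i => w i.1 * push (f i.1) P i.2.1 i.2.2 with hqdef
    set t : X × B × E → ℝ := fun i =>
      (Fintype.card B : ℝ) * push (f i.1) P i.2.1 i.2.2 / (∑ a, P (a, i.2.2)) with htdef
    have hq0 : ∀ i, 0 ≤ q i := fun i => mul_nonneg (hw0 _) (push_nonneg _ _ hP0 _ _)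
    have hq1 : ∑ i, q i = 1 := by
      rw [hqdef, Fintype.sum_prod_type]
      have hx : ∀ x : X, ∑ j : B × E, w x * push (f x) P j.1 j.2 = w x := by
        intro x
        rw [← Finset.mul_sum, Fintype.sum_prod_type, Finset.sum_comm]
        have : ∑ e : E, ∑ b : B, push (f x) P b e = 1 := by
          rw [← hPEsum]
          exact Finset.sum_congr rfl fun e _ => push_sum (f x) P e
        rw [this, mul_one]
      rw [Finset.sum_congr rfl fun x _ => hx x, hw1]
    have ht0 : ∀ i, 0 ≤ t i := fun i =>
      div_nonneg (mul_nonneg hM0.le (push_nonneg _ _ hP0 _ _)) (hPE _).le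
    have htpos : ∀ i, 0 < q i → 0 < t i := by
      intro i hqi
      have hpush : 0 < push (f i.1) P i.2.1 i.2.2 := by
        rcases (push_nonneg (f i.1) P hP0 i.2.1 i.2.2).lt_or_eq with h | h
        · exact h
        · exfalso
          rw [hqdef] at hqi
          simp only [← h, mul_zero] at hqi
          exact lt_irrefl _ hqi
      exact div_pos (mul_pos hM0 hpush) (hPE _)
    have hjen := jensen_log q t hq0 hq1 ht0 htpos
    have hpos := sum_pos_of_jensen q t hq0 hq1 ht0 htpos
    have hLHS : ∑ i, q i * Real.log (t i) = ∑ x, w x *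
        ∑ b : B, ∑ e : E, push (f x) P b e *
          Real.log ((Fintype.card B : ℝ) * push (f x) P b e / (∑ a, P (a, e))) := by
      rw [Fintype.sum_prod_type]
      apply Finset.sum_congr rfl; intro x _
      rw [Fintype.sum_prod_type, Finset.mul_sum]
      apply Finset.sum_congr rfl; intro b _
      rw [Finset.mul_sum]
      apply Finset.sum_congr rfl; intro e _
      rw [hqdef, htdef]
      ring
    have hsum : ∑ i, q i * t i ≤ 1 + (Fintype.card B : ℝ) *
        ∑ a : A, ∑ e : E, P (a, e) ^ 2 * (∑ a', P (a', e))⁻¹ := by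
      have step1 : ∑ i, q i * t i = ∑ e : E,
          ((Fintype.card B : ℝ) * (∑ a, P (a, e))⁻¹) *
            (∑ x, w x * ∑ b, (push (f x) P b e)^2) := by
        rw [Fintype.sum_prod_type]
        have hx : ∀ x : X, ∑ j : B × E, q (x, j) * t (x, j)
            = ∑ e : E, ((Fintype.card B : ℝ) * (∑ a, P (a, e))⁻¹) *
              (w x * ∑ b, (push (f x) P b e)^2) := by
          intro x
          rw [Fintype.sum_prod_type, Finset.sum_comm]
          apply Finset.sum_congr rfl; intro e _
          rw [Finset.mul_sum, Finset.mul_sum]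
          apply Finset.sum_congr rfl; intro b _
          rw [hqdef, htdef]
          simp only []
          rw [div_eq_mul_inv]
          ring
        rw [Finset.sum_congr rfl fun x _ => hx x, Finset.sum_comm]
        exact Finset.sum_congr rfl fun e _ => (Finset.mul_sum _ _ _).symm
      have step2 : ∀ e : E, ((Fintype.card B : ℝ) * (∑ a, P (a, e))⁻¹) *
          (∑ x, w x * ∑ b, (push (f x) P b e)^2)
          ≤ (Fintype.card B : ℝ) * ((∑ a, P (a, e)^2) * (∑ a, P (a, e))⁻¹)
            + (∑ a, P (a, e)) := by
        intro e
        have hsm := second_moment P hP0 w hw0 hw1 f huniv e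
        have hc : (0:ℝ) ≤ (Fintype.card B : ℝ) * (∑ a, P (a, e))⁻¹ :=
          mul_nonneg hM0.le (inv_nonneg.mpr (hPE e).le)
        have h1 := mul_le_mul_of_nonneg_left hsm hc
        have heq : ((Fintype.card B : ℝ) * (∑ a, P (a, e))⁻¹) *
            ((∑ a, P (a, e)^2) + (∑ a, P (a, e))^2 * (Fintype.card B : ℝ)⁻¹)
            = (Fintype.card B : ℝ) * ((∑ a, P (a, e)^2) * (∑ a, P (a, e))⁻¹)
              + (∑ a, P (a, e)) := by
          have hne1 : (∑ a, P (a, e)) ≠ 0 := (hPE e).ne'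
          have hne2 : (Fintype.card B : ℝ) ≠ 0 := hM0.ne'
          field_simp
        linarith
      have step3 : ∑ e : E, ((Fintype.card B : ℝ) * ((∑ a, P (a, e)^2) * (∑ a, P (a, e))⁻¹)
            + (∑ a, P (a, e)))
          = (Fintype.card B : ℝ) *
            (∑ a : A, ∑ e : E, P (a, e) ^ 2 * (∑ a', P (a', e))⁻¹) + 1 := by
        rw [Finset.sum_add_distrib, hPEsum, ← Finset.mul_sum]
        congr 2
        rw [Finset.sum_comm]
        exact Finset.sum_congr rfl fun e _ => Finset.sum_mul _ _ _
      calc ∑ i, q i * t i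
          = ∑ e : E, ((Fintype.card B : ℝ) * (∑ a, P (a, e))⁻¹) *
            (∑ x, w x * ∑ b, (push (f x) P b e)^2) := step1
        _ ≤ ∑ e : E, ((Fintype.card B : ℝ) * ((∑ a, P (a, e)^2) * (∑ a, P (a, e))⁻¹)
            + (∑ a, P (a, e))) := Finset.sum_le_sum fun e _ => step2 e
        _ = (Fintype.card B : ℝ) *
            (∑ a : A, ∑ e : E, P (a, e) ^ 2 * (∑ a', P (a', e))⁻¹) + 1 := step3
        _ = 1 + (Fintype.card B : ℝ) *
            (∑ a : A, ∑ e : E, P (a, e) ^ 2 * (∑ a', P (a', e))⁻¹) := by ring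
    calc ∑ x, w x * ∑ b : B, ∑ e : E, push (f x) P b e *
          Real.log ((Fintype.card B : ℝ) * push (f x) P b e / (∑ a, P (a, e)))
        = ∑ i, q i * Real.log (t i) := hLHS.symm
      _ ≤ Real.log (∑ i, q i * t i) := hjen
      _ ≤ Real.log (1 + (Fintype.card B : ℝ) *
          ∑ a : A, ∑ e : E, P (a, e) ^ 2 * (∑ a', P (a', e))⁻¹) :=
        Real.log_le_log hpos hsum
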